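/- Let ω ∈ ℝ with ω ≠ 0 and σ : ℕ → ℝ. Define infinite matrices C, M : ℕ × ℕ → ℂ by C_{j,j} = −iω + σ_j/2, C_{j,j−1} = σ_{j−1}/2 for j ≥ 1, and C_{j,k} = 0 otherwise; and M_{j,k} = (2(−1)^{j+k}/(−2iω + σ_j)) Π_{l=k}^{j−1} (σ_l/(−2iω + σ_l)) for k ≤ j (empty product equal to 1 for k = j) and M_{j,k} = 0 for k > j (all the denominators −2iω + σ_l are nonzero since ω ≠ 0 is real and σ_l is real). Then M is a two-sided inverse of C: for all j, m ∈ ℕ, Σ_k C_{j,k} M_{k,m} = δ_{j,m} and Σ_k M_{j,k} C_{k,m} = δ_{j,m}, where both sums have finitely many nonzero terms and δ is the Kronecker delta. -/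

import Mathlib

/-- The lower-bidiagonal operator `C₁`: `C_{j,j} = −iω + σ_j/2`,
`C_{j,j−1} = σ_{j−1}/2` for `j ≥ 1`, all other entries zero. -/
noncomputable def Cmat1 (ω : ℝ) (σ : ℕ → ℝ) (j k : ℕ) : ℂ :=
  if k = j then -(Complex.I * (ω : ℂ)) + (σ j : ℂ) / 2
  else if j = k + 1 then (σ k : ℂ) / 2
  else 0

/-- The lower-triangular operator `M₁` with entries
`M_{j,k} = (2(−1)^{j+k}/(−2iω + σ_j)) Π_{l=k}^{j−1} (σ_l/(−2iω + σ_l))` for `k ≤ j`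
(empty product equal to `1` for `k = j`), and `0` for `k > j`. -/
noncomputable def Mmat1 (ω : ℝ) (σ : ℕ → ℝ) (j k : ℕ) : ℂ :=
  if k ≤ j then
    (2 * (-1 : ℂ) ^ (j + k) / (-(2 * Complex.I * (ω : ℂ)) + (σ j : ℂ))) *
      ∏ l ∈ Finset.Ico k j, ((σ l : ℂ) / (-(2 * Complex.I * (ω : ℂ)) + (σ l : ℂ)))
  else 0

lemma aux1 (a b P s : ℂ) (ha : a ≠ 0) (hb : b ≠ 0) (e : ℕ) :
    s / 2 * (2 * (-1 : ℂ) ^ e / a * P) +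
      b / 2 * (2 * (-1 : ℂ) ^ (e + 1) / b * (P * (s / a))) = 0 := by
  field_simp
  ring

lemma aux2 (dj dm Q s : ℂ) (hj : dj ≠ 0) (hm : dm ≠ 0) (e : ℕ) :
    (2 * (-1 : ℂ) ^ e / dj * (s / dm * Q)) * (dm / 2) +
      (2 * (-1 : ℂ) ^ (e + 1) / dj * Q) * (s / 2) = 0 := by
  field_simp
  ring

lemma aux3 (d : ℂ) (hd : d ≠ 0) (n : ℕ) :
    d / 2 * (2 * (-1 : ℂ) ^ (n + n) / d * 1) = 1 := by
  rw [show n + n = 2 * n by ring, pow_mul]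
  norm_num
  field_simp

lemma aux4 (d : ℂ) (hd : d ≠ 0) (n : ℕ) :
    (2 * (-1 : ℂ) ^ (n + n) / d * 1) * (d / 2) = 1 := by
  rw [mul_comm]; exact aux3 d hd n

/-- `M₁` is a two-sided inverse of `C₁`. The sums over `k` have finitely
many nonzero terms, so they are expressed as `tsum`s. -/
theorem stmt16 (ω : ℝ) (hω : ω ≠ 0) (σ : ℕ → ℝ) :
    (∀ j m : ℕ, ∑' k : ℕ, Cmat1 ω σ j k * Mmat1 ω σ k m =
      if j = m then 1 else 0) ∧
    (∀ j m : ℕ, ∑' k : ℕ, Mmat1 ω σ j k * Cmat1 ω σ k m =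
      if j = m then 1 else 0) := by
  have hd : ∀ l : ℕ, (-(2 * Complex.I * (ω : ℂ)) + (σ l : ℂ)) ≠ 0 := by
    intro l h
    have him := congrArg Complex.im h
    simp at him
    exact hω him
  have hd2 : ∀ l : ℕ, -(Complex.I * (ω : ℂ)) + (σ l : ℂ) / 2 =
      (-(2 * Complex.I * (ω : ℂ)) + (σ l : ℂ)) / 2 := by
    intro l; ring
  constructor
  · intro j m
    cases j with
    | zero =>
      rw [tsum_eq_sum (s := ({0} : Finset ℕ))
        (by intro k hk
            simp only [Finset.mem_singleton] at hk
            simp [Cmat1, hk, Nat.succ_ne_zero])]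
      simp only [Finset.sum_singleton]
      by_cases hm : m = 0
      · subst hm
        simp only [Cmat1, Mmat1, if_pos rfl, Finset.Ico_self, Finset.prod_empty,
          le_refl, if_pos]
        rw [hd2 0]
        exact aux3 _ (hd 0) 0
      · simp [Cmat1, Mmat1, hm, Ne.symm hm, Nat.pos_of_ne_zero hm]
    | succ n =>
      rw [tsum_eq_sum (s := ({n, n + 1} : Finset ℕ))
        (by intro k hk
            simp only [Finset.mem_insert, Finset.mem_singleton, not_or] at hk
            have h1 : ¬ (k = n + 1) := hk.2
            have h2 : ¬ (n + 1 = k + 1) := by omega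
            simp [Cmat1, h1, h2, Ne.symm hk.1])]
      rw [Finset.sum_insert (by simp)]
      simp only [Finset.sum_singleton]
      rcases lt_trichotomy m (n + 1) with hm | hm | hm
      · -- m ≤ n
        have hmn : m ≤ n := by omega
        have hne : ¬ (n + 1 = m) := by omega
        simp only [Cmat1, Mmat1, if_neg (by omega : ¬ (n = n + 1)),
          if_pos rfl, if_pos (rfl : n + 1 = n + 1), if_pos hmn,
          if_pos (by omega : m ≤ n + 1), if_neg hne]
        rw [Finset.prod_Ico_succ_top hmn, hd2 (n + 1),
          show n + 1 + m = (n + m) + 1 from by ring]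
        exact aux1 _ _ _ _ (hd n) (hd (n + 1)) (n + m)
      · -- m = n + 1
        subst hm
        simp only [Cmat1, Mmat1, if_neg (by omega : ¬ (n = n + 1)),
          if_pos rfl, if_pos (rfl : n + 1 = n + 1),
          if_neg (by omega : ¬ (n + 1 ≤ n)), if_pos (le_refl (n + 1)),
          Finset.Ico_self, Finset.prod_empty, mul_zero, zero_add]
        rw [hd2 (n + 1)]
        exact aux3 _ (hd (n + 1)) (n + 1)
      · -- m > n + 1
        have h1 : ¬ (m ≤ n) := by omega
        have h2 : ¬ (m ≤ n + 1) := by omega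
        have h3 : ¬ (n + 1 = m) := by omega
        simp [Mmat1, h1, h2, h3]
  · intro j m
    rw [tsum_eq_sum (s := ({m, m + 1} : Finset ℕ))
      (by intro k hk
          simp only [Finset.mem_insert, Finset.mem_singleton, not_or] at hk
          have h1 : ¬ (m = k) := fun h => hk.1 h.symm
          have h2 : ¬ (k = m + 1) := hk.2
          simp [Cmat1, h1, h2])]
    rw [Finset.sum_insert (by simp)]
    simp only [Finset.sum_singleton]
    rcases lt_trichotomy m j with hm | hm | hm
    · -- m < j
      have hmj : m + 1 ≤ j := hm
      have hne : ¬ (j = m) := by omega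
      simp only [Cmat1, Mmat1, eq_self_iff_true, if_true, if_neg (by omega : ¬ (m = m + 1)),
        if_pos (le_of_lt hm), if_pos hmj, if_neg hne]
      rw [Finset.prod_eq_prod_Ico_succ_bot hm, hd2 m,
        show j + (m + 1) = (j + m) + 1 from by ring]
      exact aux2 _ _ _ _ (hd j) (hd m) (j + m)
    · -- m = j
      subst hm
      simp only [Cmat1, Mmat1, eq_self_iff_true, if_true, if_neg (by omega : ¬ (m = m + 1)),
        if_pos (le_refl m), if_neg (by omega : ¬ (m + 1 ≤ m)), Finset.Ico_self,
        Finset.prod_empty, zero_mul, add_zero]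
      rw [hd2 m]
      exact aux4 _ (hd m) m
    · -- m > j
      have h1 : ¬ (m ≤ j) := by omega
      have h2 : ¬ (m + 1 ≤ j) := by omega
      have h3 : ¬ (j = m) := by omega
      simp [Mmat1, h1, h2, h3]
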